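/- arXiv:1511.03345 — 3 statements merged into one kernel-verified Lean document; each statement's English description precedes it below -/
import Mathlib

section
/- Let U ⊆ ℂ be open, t ∈ ℂ with t ∉ U, and let y_1, …, y_m : U → ℂ be holomorphic. Assume: (i) for every z ∈ U and every 1 ≤ j ≤ m the limit L_j(z) := lim_{n→∞} (|y_j^{(n)}(z)|/n!)^{1/n} exists; (ii) for every z ∈ U, L_1(z) = 1/|z−t| and L_j(z) < 1/|z−t| for all 2 ≤ j ≤ m. Let f_1 = Σ_{j=1}^{m} c_j y_j and f_2 = Σ_{j=1}^{m} d_j y_j with c_1, …, c_m, d_1, …, d_m ∈ ℂ and d_1 ≠ 0. Then for every z ∈ U one has f_2^{(n)}(z) ≠ 0 for all sufficiently large n and lim_{n→∞} f_1^{(n)}(z)/f_2^{(n)}(z) = c_1/d_1; in particular this limit exists and is the same constant for all z ∈ U. -/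
open Filter Topology

lemma iteratedDeriv_linear_combo {U : Set ℂ} (hU : IsOpen U) {m : ℕ} {y : Fin m → ℂ → ℂ}
    (hy : ∀ j, DifferentiableOn ℂ (y j) U) (e : Fin m → ℂ) {z : ℂ} (hz : z ∈ U) (n : ℕ) :
    iteratedDeriv n (fun w => ∑ j : Fin m, e j * y j w) z
      = ∑ j : Fin m, e j * iteratedDeriv n (y j) z := by
  have hyc : ∀ j, ContDiffOn ℂ n (y j) U := fun j => (hy j).contDiffOn hU
  have conv : ∀ g : ℂ → ℂ, iteratedDerivWithin n g U z = iteratedDeriv n g z := fun g => by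
    rw [iteratedDerivWithin_eq_iteratedFDerivWithin, iteratedDeriv_eq_iteratedFDeriv,
      iteratedFDerivWithin_of_isOpen n hU hz]
  rw [← conv]
  have hsum : iteratedFDerivWithin ℂ n (fun w => ∑ j : Fin m, e j * y j w) U z
      = ∑ j : Fin m, iteratedFDerivWithin ℂ n (fun w => e j * y j w) U z :=
    by
      have h := iteratedFDerivWithin_sum_apply (f := fun j w => e j * y j w) (u := Finset.univ)
        hU.uniqueDiffOn hz (fun j _ => contDiffOn_const.mul (hyc j) z hz)
      rw [show (∑ j : Fin m, fun w => e j * y j w) = fun w => ∑ j : Fin m, e j * y j w from by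
        ext w; simp [Finset.sum_apply]] at h
      exact h
  rw [iteratedDerivWithin_eq_iteratedFDerivWithin, hsum,
    ContinuousMultilinearMap.sum_apply]
  refine Finset.sum_congr rfl fun j _ => ?_
  rw [← iteratedDerivWithin_eq_iteratedFDerivWithin,
    iteratedDerivWithin_const_mul hz hU.uniqueDiffOn _ (hyc j z hz), conv]

/-- Let `y 0, …, y (m-1)` be holomorphic on an open set `U` not containing `t`, such that
at every `z ∈ U` the root-test limits `L j z` of the Taylor coefficients exist, with
`L 0 z = 1/|z-t|` and `L j z < 1/|z-t|` for `j ≠ 0` (so `y 0` has radius of convergence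
exactly `|z-t|` while the others have strictly larger radius).  If
`f₁ = Σ c j • y j` and `f₂ = Σ d j • y j` with `d 0 ≠ 0`, then at every `z ∈ U`,
`f₂^{(n)}(z) ≠ 0` for large `n` and `f₁^{(n)}(z)/f₂^{(n)}(z) → c 0 / d 0`,
the same constant for all `z ∈ U`. -/
theorem deriv_ratio_of_solutions_tendsto_const
    (U : Set ℂ) (hU : IsOpen U) (t : ℂ) (ht : t ∉ U)
    (m : ℕ) (hm : 0 < m) (y : Fin m → ℂ → ℂ)
    (hy : ∀ j : Fin m, DifferentiableOn ℂ (y j) U)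
    (L : Fin m → ℂ → ℝ)
    (hL : ∀ z ∈ U, ∀ j : Fin m,
      Tendsto
        (fun n : ℕ =>
          (‖iteratedDeriv n (y j) z‖ / n.factorial) ^ (1 / (n : ℝ)))
        atTop (𝓝 (L j z)))
    (hL1 : ∀ z ∈ U, L ⟨0, hm⟩ z = 1 / ‖z - t‖)
    (hLj : ∀ z ∈ U, ∀ j : Fin m, j ≠ ⟨0, hm⟩ → L j z < 1 / ‖z - t‖)
    (c d : Fin m → ℂ) (hd : d ⟨0, hm⟩ ≠ 0)
    (f₁ f₂ : ℂ → ℂ)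
    (hf₁ : f₁ = fun z => ∑ j : Fin m, c j * y j z)
    (hf₂ : f₂ = fun z => ∑ j : Fin m, d j * y j z) :
    ∀ z ∈ U,
      (∀ᶠ n in atTop, iteratedDeriv n f₂ z ≠ 0) ∧
      Tendsto (fun n : ℕ => iteratedDeriv n f₁ z / iteratedDeriv n f₂ z) atTop
        (𝓝 (c ⟨0, hm⟩ / d ⟨0, hm⟩)) := by
  intro z hz
  set j0 : Fin m := ⟨0, hm⟩ with hj0
  set A : Fin m → ℕ → ℂ := fun j n => iteratedDeriv n (y j) z with hA
  set u : Fin m → ℕ → ℝ :=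
    fun j n => (‖A j n‖ / n.factorial) ^ (1 / (n : ℝ)) with hu
  have hUL : ∀ j, Tendsto (u j) atTop (𝓝 (L j z)) := fun j => hL z hz j
  have hunn : ∀ j n, 0 ≤ u j n := fun j n =>
    Real.rpow_nonneg (div_nonneg (norm_nonneg _) (Nat.cast_nonneg _)) _
  have hr : (0:ℝ) < ‖z - t‖ := by
    rw [norm_pos_iff]
    intro h
    exact ht (by rwa [sub_eq_zero.mp h] at hz)
  set l0 : ℝ := 1 / ‖z - t‖ with hl0
  have hl0pos : 0 < l0 := by positivity
  have hL0 : L j0 z = l0 := hL1 z hz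
  -- the rpow identity
  have hpow : ∀ j n, n ≠ 0 → (u j n) ^ n = ‖A j n‖ / n.factorial := by
    intro j n hn
    rw [hu]
    simp only [one_div]
    exact Real.rpow_inv_natCast_pow
      (div_nonneg (norm_nonneg _) (Nat.cast_nonneg _)) hn
  -- eventual nonvanishing of A j0
  have hev0 : ∀ᶠ n in atTop, l0/2 < u j0 n := by
    refine (hUL j0).eventually_const_lt ?_
    rw [hL0]; linarith
  have hAne : ∀ᶠ n in atTop, A j0 n ≠ 0 := by
    filter_upwards [hev0, eventually_ge_atTop 1] with n h1 h2 hA0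
    have : u j0 n = 0 := by
      rw [hu]
      simp [hA0]
      exact Real.zero_rpow (by positivity)
    linarith [hl0pos]
  -- key: ratios tend to zero
  have hzero : ∀ j : Fin m, j ≠ j0 → Tendsto (fun n => A j n / A j0 n) atTop (𝓝 0) := by
    intro j hj
    have hLjr : L j z < l0 := hLj z hz j hj
    have hLjnn : 0 ≤ L j z := ge_of_tendsto' (hUL j) (fun n => hunn j n)
    set ρ : ℝ := (L j z + l0)/2 with hρ
    set ρ' : ℝ := (ρ + l0)/2 with hρ'
    have h1 : L j z < ρ := by rw [hρ]; linarith
    have h2 : ρ < ρ' := by rw [hρ']; linarith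
    have h3 : ρ' < l0 := by rw [hρ']; linarith
    have hρpos : 0 < ρ := by rw [hρ]; linarith
    have hρ'pos : 0 < ρ' := by linarith
    have hev1 : ∀ᶠ n in atTop, u j n < ρ := (hUL j).eventually_lt_const h1
    have hev2 : ∀ᶠ n in atTop, ρ' < u j0 n := by
      refine (hUL j0).eventually_const_lt ?_
      rw [hL0]; exact h3
    have hbound : ∀ᶠ n in atTop, ‖A j n / A j0 n‖ ≤ (ρ/ρ')^n := by
      filter_upwards [hev1, hev2, eventually_ge_atTop 1] with n e1 e2 e3
      have hn : n ≠ 0 := by omega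
      have hfpos : (0:ℝ) < n.factorial := by positivity
      have hAj : ‖A j n‖ = (u j n)^n * n.factorial := by
        rw [hpow j n hn]; field_simp
      have hAj0 : ‖A j0 n‖ = (u j0 n)^n * n.factorial := by
        rw [hpow j0 n hn]; field_simp
      have hu0pos : 0 < u j0 n := lt_trans hρ'pos e2
      rw [norm_div, hAj, hAj0,
        mul_div_mul_right _ _ (ne_of_gt hfpos), ← div_pow]
      exact pow_le_pow_left₀ (div_nonneg (hunn j n) hu0pos.le)
        (div_le_div₀ hρpos.le e1.le hρ'pos e2.le) n
    refine squeeze_zero_norm' hbound ?_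
    exact tendsto_pow_atTop_nhds_zero_of_lt_one
      (div_nonneg (le_of_lt hρpos) (le_of_lt hρ'pos))
      ((div_lt_one hρ'pos).mpr h2)
  -- sums divided by A j0 converge
  have hsum : ∀ e : Fin m → ℂ,
      Tendsto (fun n => (∑ j : Fin m, e j * A j n) / A j0 n) atTop (𝓝 (e j0)) := by
    intro e
    have heq : ∀ n, (∑ j : Fin m, e j * A j n) / A j0 n
        = ∑ j : Fin m, e j * (A j n / A j0 n) := by
      intro n
      rw [Finset.sum_div]
      exact Finset.sum_congr rfl fun j _ => (mul_div_assoc _ _ _)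
    simp only [heq]
    have : (e j0) = ∑ j : Fin m, (if j = j0 then e j0 else 0) := by
      rw [Finset.sum_ite_eq' Finset.univ j0 (fun _ => e j0)]
      simp
    rw [this]
    refine tendsto_finset_sum _ fun j _ => ?_
    by_cases hj : j = j0
    · simp only [if_pos hj]
      have heq2 : (fun n => e j * (A j n / A j0 n)) =ᶠ[atTop] (fun _ => e j0) := by
        filter_upwards [hAne] with n hne
        rw [hj, div_self hne, mul_one]
      exact Tendsto.congr' heq2.symm tendsto_const_nhds
    · simp only [if_neg hj]
      have := (hzero j hj).const_mul (e j)
      simpa using this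
  -- nonvanishing of f₂ derivatives
  have hlin : ∀ (e : Fin m → ℂ) n,
      iteratedDeriv n (fun w => ∑ j : Fin m, e j * y j w) z = ∑ j : Fin m, e j * A j n :=
    fun e n => iteratedDeriv_linear_combo hU hy e hz n
  have hf₂d : ∀ n, iteratedDeriv n f₂ z = ∑ j : Fin m, d j * A j n := by
    intro n; rw [hf₂]; exact hlin d n
  have hf₁d : ∀ n, iteratedDeriv n f₁ z = ∑ j : Fin m, c j * A j n := by
    intro n; rw [hf₁]; exact hlin c n
  have hqne : ∀ᶠ n in atTop, (∑ j : Fin m, d j * A j n) / A j0 n ≠ 0 :=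
    (hsum d).eventually_ne hd
  have hSdne : ∀ᶠ n in atTop, (∑ j : Fin m, d j * A j n) ≠ 0 := by
    filter_upwards [hqne] with n hq hS
    exact hq (by rw [hS, zero_div])
  constructor
  · filter_upwards [hSdne] with n hn
    rw [hf₂d]; exact hn
  · have hdiv : Tendsto (fun n =>
        ((∑ j : Fin m, c j * A j n) / A j0 n) / ((∑ j : Fin m, d j * A j n) / A j0 n))
        atTop (𝓝 (c j0 / d j0)) := (hsum c).div (hsum d) hd
    refine Tendsto.congr' ?_ hdiv
    filter_upwards [hAne] with n hA0
    rw [hf₁d, hf₂d]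
    rcases eq_or_ne (∑ j : Fin m, d j * A j n) 0 with h | h
    · rw [h, zero_div, div_zero, div_zero]
    · field_simp
end

section
/- Let U ⊆ ℂ be open, t ∈ ℂ with t ∉ U, and q_0, q_1 : U → ℂ holomorphic. Define q_{0,n}, q_{1,n} : U → ℂ for n ≥ 2 by q_{0,2} := q_0, q_{1,2} := q_1, and q_{0,n+1} := q_{0,n}′ + q_{1,n}·q_0, q_{1,n+1} := q_{1,n}′ + q_{0,n} + q_{1,n}·q_1. Let y_1, y_2 : U → ℂ be holomorphic solutions of y″ = q_0 y + q_1 y′ on U and let z ∈ U satisfy: (i) y_1(z) y_2′(z) − y_2(z) y_1′(z) ≠ 0; (ii) y_2(z) ≠ 0; (iii) lim_{n→∞} (|y_1^{(n)}(z)|/n!)^{1/n} = 1/|z−t|; (iv) the limit lim_{n→∞} (|y_2^{(n)}(z)|/n!)^{1/n} exists and is strictly less than 1/|z−t|. Then q_{1,n}(z) ≠ 0 for all sufficiently large n and lim_{n→∞} q_{0,n}(z)/q_{1,n}(z) = −y_2′(z)/y_2(z). -/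
open Filter Topology

/-- The coefficients `(q_{0,n}, q_{1,n})` (here `q2Seq q0 q1 s = (q_{0,2+s}, q_{1,2+s})`)
obtained by repeatedly differentiating the equation `y'' = q0 y + q1 y'`. -/
noncomputable def q2Seq (q0 q1 : ℂ → ℂ) : ℕ → (ℂ → ℂ) × (ℂ → ℂ)
  | 0 => (q0, q1)
  | s + 1 =>
      (deriv (q2Seq q0 q1 s).1 + (q2Seq q0 q1 s).2 * q0,
       deriv (q2Seq q0 q1 s).2 + (q2Seq q0 q1 s).1 + (q2Seq q0 q1 s).2 * q1)

lemma q2Seq_analytic (U : Set ℂ) (q0 q1 : ℂ → ℂ)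
    (hq0 : AnalyticOnNhd ℂ q0 U) (hq1 : AnalyticOnNhd ℂ q1 U) (s : ℕ) :
    AnalyticOnNhd ℂ (q2Seq q0 q1 s).1 U ∧ AnalyticOnNhd ℂ (q2Seq q0 q1 s).2 U := by
  induction s with
  | zero => exact ⟨hq0, hq1⟩
  | succ s ih =>
    exact ⟨(ih.1.deriv).add (ih.2.mul hq0),
      ((ih.2.deriv).add ih.1).add (ih.2.mul hq1)⟩

lemma q2Seq_spec (U : Set ℂ) (hU : IsOpen U) (q0 q1 : ℂ → ℂ)
    (hq0 : AnalyticOnNhd ℂ q0 U) (hq1 : AnalyticOnNhd ℂ q1 U)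
    (y : ℂ → ℂ) (hy : AnalyticOnNhd ℂ y U)
    (heq : ∀ w ∈ U, iteratedDeriv 2 y w = q0 w * y w + q1 w * deriv y w)
    (s : ℕ) : ∀ w ∈ U, iteratedDeriv (s + 2) y w =
      (q2Seq q0 q1 s).1 w * y w + (q2Seq q0 q1 s).2 w * deriv y w := by
  induction s with
  | zero => simpa [q2Seq] using heq
  | succ s ih =>
    intro w hw
    obtain ⟨hA, hB⟩ := q2Seq_analytic U q0 q1 hq0 hq1 s
    have hAd : DifferentiableAt ℂ (q2Seq q0 q1 s).1 w := (hA w hw).differentiableAt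
    have hBd : DifferentiableAt ℂ (q2Seq q0 q1 s).2 w := (hB w hw).differentiableAt
    have hyd : DifferentiableAt ℂ y w := (hy w hw).differentiableAt
    have hy'd : DifferentiableAt ℂ (deriv y) w := ((hy.deriv) w hw).differentiableAt
    have hev : (iteratedDeriv (s + 2) y) =ᶠ[𝓝 w]
        fun x => (q2Seq q0 q1 s).1 x * y x + (q2Seq q0 q1 s).2 x * deriv y x := by
      filter_upwards [hU.mem_nhds hw] with x hx using ih x hx
    have h1 : iteratedDeriv (s + 1 + 2) y w = deriv (iteratedDeriv (s + 2) y) w := by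
      rw [show s + 1 + 2 = (s + 2) + 1 by ring, iteratedDeriv_succ]
    have h2 : deriv (deriv y) w = q0 w * y w + q1 w * deriv y w := by
      rw [← heq w hw, show (2 : ℕ) = 1 + 1 by rfl, iteratedDeriv_succ, iteratedDeriv_one]
    rw [h1, hev.deriv_eq, deriv_fun_add (f := fun x => (q2Seq q0 q1 s).1 x * y x)
      (g := fun x => (q2Seq q0 q1 s).2 x * deriv y x) (hAd.mul hyd) (hBd.mul hy'd),
      deriv_fun_mul hAd hyd, deriv_fun_mul hBd hy'd, h2]
    show _ = (deriv (q2Seq q0 q1 s).1 + (q2Seq q0 q1 s).2 * q0) w * y w +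
      (deriv (q2Seq q0 q1 s).2 + (q2Seq q0 q1 s).1 + (q2Seq q0 q1 s).2 * q1) w * deriv y w
    simp only [Pi.add_apply, Pi.mul_apply]
    ring

/-- For a second order equation `y'' = q0 y + q1 y'` on an open `U`, with `t ∉ U` a
singularity: if at `z ∈ U` the solutions `y₁, y₂` have nonvanishing Wronskian,
`y₂(z) ≠ 0`, the Taylor series of `y₁` at `z` has radius of convergence exactly
`|z - t|` (root-test limit `1/|z-t|`) while the root-test limit of `y₂` exists and is
`< 1/|z-t|`, then `q_{1,n}(z) ≠ 0` for large `n` and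
`q_{0,n}(z)/q_{1,n}(z) → -y₂'(z)/y₂(z)`. -/
theorem qRatio_tendsto_neg_log_deriv
    (U : Set ℂ) (hU : IsOpen U) (t : ℂ) (ht : t ∉ U)
    (q0 q1 : ℂ → ℂ)
    (hq0 : DifferentiableOn ℂ q0 U) (hq1 : DifferentiableOn ℂ q1 U)
    (y₁ y₂ : ℂ → ℂ)
    (hy₁ : DifferentiableOn ℂ y₁ U) (hy₂ : DifferentiableOn ℂ y₂ U)
    (heq₁ : ∀ w ∈ U, iteratedDeriv 2 y₁ w = q0 w * y₁ w + q1 w * deriv y₁ w)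
    (heq₂ : ∀ w ∈ U, iteratedDeriv 2 y₂ w = q0 w * y₂ w + q1 w * deriv y₂ w)
    (z : ℂ) (hz : z ∈ U)
    (hW : y₁ z * deriv y₂ z - y₂ z * deriv y₁ z ≠ 0)
    (hy₂z : y₂ z ≠ 0)
    (hrad₁ : Tendsto
      (fun n : ℕ => (‖iteratedDeriv n y₁ z‖ / n.factorial) ^ (1 / (n : ℝ)))
      atTop (𝓝 (1 / ‖z - t‖)))
    (hrad₂ : ∃ B : ℝ,
      Tendsto
        (fun n : ℕ => (‖iteratedDeriv n y₂ z‖ / n.factorial) ^ (1 / (n : ℝ)))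
        atTop (𝓝 B) ∧ B < 1 / ‖z - t‖) :
    (∀ᶠ n in atTop, (q2Seq q0 q1 (n - 2)).2 z ≠ 0) ∧
      Tendsto (fun n : ℕ => (q2Seq q0 q1 (n - 2)).1 z / (q2Seq q0 q1 (n - 2)).2 z)
        atTop (𝓝 (-(deriv y₂ z / y₂ z))) := by
  obtain ⟨B, hB, hBL⟩ := hrad₂
  set L : ℝ := 1 / ‖z - t‖ with hLdef
  have hzt : z ≠ t := fun h => ht (h ▸ hz)
  have habs : 0 < ‖z - t‖ := by
    simpa [sub_eq_zero] using hzt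
  have hL : 0 < L := by positivity
  -- notation
  set a : ℕ → ℝ := fun n => (‖iteratedDeriv n y₁ z‖ / n.factorial) ^ (1 / (n : ℝ))
    with ha_def
  set b : ℕ → ℝ := fun n => (‖iteratedDeriv n y₂ z‖ / n.factorial) ^ (1 / (n : ℝ))
    with hb_def
  have ha_nonneg : ∀ n, 0 ≤ a n := fun n => Real.rpow_nonneg (by positivity) _
  have hb_nonneg : ∀ n, 0 ≤ b n := fun n => Real.rpow_nonneg (by positivity) _
  have hB0 : 0 ≤ B := ge_of_tendsto' hB hb_nonneg
  set ε : ℝ := (L - B) / 4 with hε_def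
  have hε : 0 < ε := by simp only [hε_def]; linarith
  have hLε : 0 < L - ε := by simp only [hε_def]; linarith
  set ρ : ℝ := (B + ε) / (L - ε) with hρ_def
  have hρ0 : 0 ≤ ρ := by positivity
  have hρ1 : ρ < 1 := by
    rw [hρ_def, div_lt_one hLε]; simp only [hε_def]; linarith
  have ha_ev : ∀ᶠ n in atTop, L - ε < a n :=
    hrad₁.eventually_const_lt (by linarith)
  have hb_ev : ∀ᶠ n in atTop, b n < B + ε :=
    hB.eventually_lt_const (by linarith)
  -- inverting the root
  have hpow : ∀ (x : ℝ) (n : ℕ), 0 ≤ x → 1 ≤ n → (x ^ (1 / (n : ℝ))) ^ n = x := by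
    intro x n hx hn
    have hn0 : (n : ℝ) ≠ 0 := Nat.cast_ne_zero.2 (by omega)
    rw [← Real.rpow_natCast (x ^ (1 / (n : ℝ))) n, ← Real.rpow_mul hx,
      one_div_mul_cancel hn0, Real.rpow_one]
  -- y₁ derivatives nonzero eventually
  have hd1 : ∀ᶠ n in atTop, iteratedDeriv n y₁ z ≠ 0 := by
    filter_upwards [ha_ev, eventually_ge_atTop 1] with n han hn1
    intro h0
    have : a n = 0 := by
      simp only [ha_def, h0, norm_zero, zero_div]
      exact Real.zero_rpow (one_div_ne_zero (Nat.cast_ne_zero.2 (by omega)))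
    rw [this] at han; linarith
  -- the ratio r tends to zero
  set r : ℕ → ℂ := fun n => iteratedDeriv n y₂ z / iteratedDeriv n y₁ z with hr_def
  have hr : Tendsto r atTop (𝓝 0) := by
    rw [tendsto_zero_iff_norm_tendsto_zero]
    refine squeeze_zero' (.of_forall fun n => norm_nonneg _) ?_
      (tendsto_pow_atTop_nhds_zero_of_lt_one hρ0 hρ1)
    filter_upwards [ha_ev, hb_ev, eventually_ge_atTop 1] with n han hbn hn1
    have hfact : (0:ℝ) < n.factorial := by positivity
    have hx1 : (a n) ^ n = ‖iteratedDeriv n y₁ z‖ / n.factorial :=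
      hpow _ n (by positivity) hn1
    have hx2 : (b n) ^ n = ‖iteratedDeriv n y₂ z‖ / n.factorial :=
      hpow _ n (by positivity) hn1
    have han' : 0 < a n := hLε.trans han
    have hnorm : ‖r n‖ = (b n) ^ n / (a n) ^ n := by
      have hd1pos : (0:ℝ) < ‖iteratedDeriv n y₁ z‖ := by
        have h := pow_pos han' n
        rw [hx1] at h
        calc (0:ℝ) < ‖iteratedDeriv n y₁ z‖ / n.factorial * n.factorial :=
              mul_pos h hfact
          _ = _ := div_mul_cancel₀ _ hfact.ne'
      rw [hx1, hx2, hr_def]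
      simp only [norm_div]
      rw [div_div_div_cancel_right₀]
      exact hfact.ne'
    rw [hnorm, ← div_pow]
    refine pow_le_pow_left₀ (by positivity) ?_ n
    calc b n / a n ≤ (B + ε) / (L - ε) :=
          div_le_div₀ (by linarith) hbn.le hLε han.le
      _ = ρ := rfl
  -- eventual nonvanishing of r n * y₁ z - y₂ z
  have htd : Tendsto (fun n => r n * y₁ z - y₂ z) atTop (𝓝 (-(y₂ z))) := by
    have := (hr.mul_const (y₁ z)).sub_const (y₂ z)
    simpa using this
  have hden : ∀ᶠ n in atTop, r n * y₁ z - y₂ z ≠ 0 :=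
    htd.eventually_ne (neg_ne_zero.2 hy₂z)
  -- identities from q2Seq_spec
  have hq0a : AnalyticOnNhd ℂ q0 U := hq0.analyticOnNhd hU
  have hq1a : AnalyticOnNhd ℂ q1 U := hq1.analyticOnNhd hU
  have hy₁a : AnalyticOnNhd ℂ y₁ U := hy₁.analyticOnNhd hU
  have hy₂a : AnalyticOnNhd ℂ y₂ U := hy₂.analyticOnNhd hU
  set W : ℂ := y₁ z * deriv y₂ z - y₂ z * deriv y₁ z with hW_def
  have hkey : ∀ᶠ n in atTop,
      iteratedDeriv n y₁ z = (q2Seq q0 q1 (n-2)).1 z * y₁ z + (q2Seq q0 q1 (n-2)).2 z * deriv y₁ z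
      ∧ iteratedDeriv n y₂ z = (q2Seq q0 q1 (n-2)).1 z * y₂ z + (q2Seq q0 q1 (n-2)).2 z * deriv y₂ z := by
    filter_upwards [eventually_ge_atTop 2] with n hn2
    have hs : n - 2 + 2 = n := Nat.sub_add_cancel hn2
    constructor
    · have := q2Seq_spec U hU q0 q1 hq0a hq1a y₁ hy₁a heq₁ (n - 2) z hz
      rwa [hs] at this
    · have := q2Seq_spec U hU q0 q1 hq0a hq1a y₂ hy₂a heq₂ (n - 2) z hz
      rwa [hs] at this
  -- main combined eventual fact
  have hmain : ∀ᶠ n in atTop, (q2Seq q0 q1 (n-2)).2 z ≠ 0 ∧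
      (q2Seq q0 q1 (n-2)).1 z / (q2Seq q0 q1 (n-2)).2 z
        = (deriv y₂ z - r n * deriv y₁ z) / (r n * y₁ z - y₂ z) := by
    filter_upwards [hkey, hd1, hden] with n hk hd1n hdenn
    obtain ⟨hk1, hk2⟩ := hk
    set A : ℂ := (q2Seq q0 q1 (n-2)).1 z with hA_def
    set Bc : ℂ := (q2Seq q0 q1 (n-2)).2 z with hBc_def
    set d1 : ℂ := iteratedDeriv n y₁ z with hd1_def
    have hrd : iteratedDeriv n y₂ z = r n * d1 := by
      rw [hr_def, hd1_def]; field_simp; exact (mul_div_cancel_right₀ _ hd1n).symm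
    have hrdk : r n * d1 = A * y₂ z + Bc * deriv y₂ z := hrd.symm.trans hk2
    have h2 : Bc * W = d1 * (r n * y₁ z - y₂ z) := by
      linear_combination Bc * hW_def + (y₂ z) * hk1 - (y₁ z) * hrdk
    have h3 : A * W = d1 * (deriv y₂ z - r n * deriv y₁ z) := by
      linear_combination A * hW_def - (deriv y₂ z) * hk1 + (deriv y₁ z) * hrdk
    have hBcne : Bc ≠ 0 := by
      intro h0
      rw [h0, zero_mul] at h2
      exact mul_ne_zero hd1n hdenn h2.symm
    refine ⟨hBcne, ?_⟩
    rw [div_eq_div_iff hBcne hdenn]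
    apply mul_right_cancel₀ hW
    calc A * (r n * y₁ z - y₂ z) * W = (A * W) * (r n * y₁ z - y₂ z) := by ring
      _ = d1 * (deriv y₂ z - r n * deriv y₁ z) * (r n * y₁ z - y₂ z) := by rw [h3]
      _ = (Bc * W) * (deriv y₂ z - r n * deriv y₁ z) := by rw [h2]; ring
      _ = (deriv y₂ z - r n * deriv y₁ z) * Bc * W := by ring
  -- limit of the explicit ratio
  have h1 : Tendsto (fun n => deriv y₂ z - r n * deriv y₁ z) atTop (𝓝 (deriv y₂ z)) := by
    simpa using (hr.mul_const (deriv y₁ z)).const_sub (deriv y₂ z)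
  have htend : Tendsto (fun n => (deriv y₂ z - r n * deriv y₁ z) / (r n * y₁ z - y₂ z))
      atTop (𝓝 (-(deriv y₂ z / y₂ z))) := by
    have := h1.div htd (neg_ne_zero.2 hy₂z)
    simpa [div_neg, Pi.div_def] using this
  refine ⟨hmain.mono fun n h => h.1, ?_⟩
  exact Tendsto.congr' (by filter_upwards [hmain] with n h using h.2.symm) htend
end

section
/- Let U ⊆ ℂ be open and q_0, q_1 : U → ℂ holomorphic. Define q_{0,n}, q_{1,n} : U → ℂ for n ≥ 2 by q_{0,2} := q_0, q_{1,2} := q_1, and q_{0,n+1} := q_{0,n}′ + q_{1,n}·q_0, q_{1,n+1} := q_{1,n}′ + q_{0,n} + q_{1,n}·q_1. Let y_1, y_2 : U → ℂ be holomorphic solutions of y″ = q_0 y + q_1 y′ on U, let z ∈ U, and let α_{1,n}, α_{2,n} ∈ ℂ (n ≥ 0) be numbers such that for each i ∈ {1,2} and each n ≥ 0, y_i^{(n)}(z)/n! = α_{1,n}·y_i^{(n+1)}(z)/(n+1)! + α_{2,n}·y_i^{(n+2)}(z)/(n+2)!. Define A_n, B_n from b_n := α_{1,n} (n ≥ 0)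 and a_n := α_{2,n−1} (n ≥ 1) by the convergent recursions. Fix N ≥ 2 and assume the two vectors (y_i^{(N)}(z)/N!, y_i^{(N+1)}(z)/(N+1)!), i = 1, 2, are linearly independent in ℂ². Then q_{0,N}(z)·A_{N−1} + q_{1,N}(z)·B_{N−1} = N!, and if moreover α_{2,N−1} ≠ 0 then q_{0,N}(z)·A_{N−2} + q_{1,N}(z)·B_{N−2} = 0; in particular, if in addition A_{N−2} ≠ 0 and q_{1,N}(z) ≠ 0, then −q_{0,N}(z)/q_{1,N}(z) = B_{N−2}/A_{N−2}. -/
open Filter Topology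

/-- Continued fraction numerators, index shifted by one: `cfA a b (n+1) = Aₙ`. -/
noncomputable def cfA (a b : ℕ → ℂ) : ℕ → ℂ
  | 0 => 1
  | 1 => b 0
  | n + 2 => b (n + 1) * cfA a b (n + 1) + a (n + 1) * cfA a b n

/-- Continued fraction denominators, index shifted by one: `cfB a b (n+1) = Bₙ`. -/
noncomputable def cfB (a b : ℕ → ℂ) : ℕ → ℂ
  | 0 => 0
  | 1 => 1
  | n + 2 => b (n + 1) * cfB a b (n + 1) + a (n + 1) * cfB a b n

lemma cf_aux (a b x c : ℕ → ℂ)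
    (hx : ∀ n, x n = b n * x (n+1) + a (n+1) * x (n+2))
    (hc : ∀ n, c (n+2) = b (n+1) * c (n+1) + a (n+1) * c n)
    (v : ℂ) (hv : v = c 1 * x 1 + a 1 * c 0 * x 2) :
    ∀ n, v = c (n+1) * x (n+1) + a (n+1) * c n * x (n+2) := by
  intro n
  induction n with
  | zero => exact hv
  | succ n ih => rw [ih, hx (n+1), hc n]; ring

lemma cf_master (a b x : ℕ → ℂ)
    (hx : ∀ n, x n = b n * x (n+1) + a (n+1) * x (n+2))
    (s : ℕ) (Q0 Q1 F : ℂ)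
    (hsol : F * x (s+2) = Q0 * x 0 + Q1 * x 1) :
    (Q0 * cfA a b (s+2) + Q1 * cfB a b (s+2) - F) * x (s+2)
      + (a (s+2) * (Q0 * cfA a b (s+1) + Q1 * cfB a b (s+1))) * x (s+3) = 0 := by
  have eA := cf_aux a b x (cfA a b) hx (fun n => rfl) (x 0)
    (by rw [hx 0]; simp [cfA]) (s+1)
  have eB := cf_aux a b x (cfB a b) hx (fun n => rfl) (x 1)
    (by simp [cfB]) (s+1)
  simp only [show s + 1 + 1 = s + 2 from rfl, show s + 1 + 2 = s + 3 from rfl] at eA eB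
  linear_combination -Q0 * eA - Q1 * eB - hsol

lemma deriv_diffOn {U : Set ℂ} (hU : IsOpen U) {f : ℂ → ℂ}
    (hf : DifferentiableOn ℂ f U) : DifferentiableOn ℂ (deriv f) U :=
  ((hf.analyticOnNhd hU).deriv).differentiableOn

lemma q2Seq_diffOn {U : Set ℂ} (hU : IsOpen U) {q0 q1 : ℂ → ℂ}
    (hq0 : DifferentiableOn ℂ q0 U) (hq1 : DifferentiableOn ℂ q1 U) (s : ℕ) :
    DifferentiableOn ℂ (q2Seq q0 q1 s).1 U ∧ DifferentiableOn ℂ (q2Seq q0 q1 s).2 U := by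
  induction s with
  | zero => exact ⟨hq0, hq1⟩
  | succ s ih =>
    exact ⟨(deriv_diffOn hU ih.1).add (ih.2.mul hq0),
      ((deriv_diffOn hU ih.2).add ih.1).add (ih.2.mul hq1)⟩

lemma sol_iter {U : Set ℂ} (hU : IsOpen U) {q0 q1 y : ℂ → ℂ}
    (hq0 : DifferentiableOn ℂ q0 U) (hq1 : DifferentiableOn ℂ q1 U)
    (hy : DifferentiableOn ℂ y U)
    (heq : ∀ w ∈ U, iteratedDeriv 2 y w = q0 w * y w + q1 w * deriv y w)
    (s : ℕ) : ∀ w ∈ U, iteratedDeriv (s + 2) y w =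
      (q2Seq q0 q1 s).1 w * y w + (q2Seq q0 q1 s).2 w * deriv y w := by
  induction s with
  | zero => exact heq
  | succ s ih =>
    intro w hw
    have hQ := q2Seq_diffOn hU hq0 hq1 s
    have hmem := hU.mem_nhds hw
    have hyw : DifferentiableAt ℂ y w := hy.differentiableAt hmem
    have hy'w : DifferentiableAt ℂ (deriv y) w :=
      (deriv_diffOn hU hy).differentiableAt hmem
    have hQ1 : DifferentiableAt ℂ (q2Seq q0 q1 s).1 w := hQ.1.differentiableAt hmem
    have hQ2 : DifferentiableAt ℂ (q2Seq q0 q1 s).2 w := hQ.2.differentiableAt hmem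
    have hev : iteratedDeriv (s+2) y =ᶠ[𝓝 w]
        fun u => (q2Seq q0 q1 s).1 u * y u + (q2Seq q0 q1 s).2 u * deriv y u :=
      Filter.eventuallyEq_of_mem hmem ih
    have h2 : deriv (deriv y) w = q0 w * y w + q1 w * deriv y w := by
      rw [← heq w hw, iteratedDeriv_succ, iteratedDeriv_one]
    have step : iteratedDeriv (s + 1 + 2) y w = deriv (iteratedDeriv (s+2) y) w := by
      rw [show s + 1 + 2 = (s + 2) + 1 by ring, iteratedDeriv_succ]
    rw [step, hev.deriv_eq, deriv_fun_add (hQ1.fun_mul hyw) (hQ2.fun_mul hy'w),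
      deriv_fun_mul hQ1 hyw, deriv_fun_mul hQ2 hy'w, h2]
    simp only [q2Seq, Pi.add_apply, Pi.mul_apply]
    ring

/-- `-q_{0,N}/q_{1,N}` equals the truncated continued fraction built from the three-term
recurrence `xₙ = α_{1,n} x_{n+1} + α_{2,n} x_{n+2}` satisfied by the normalized
derivatives `xₙ = y^{(n)}(z)/n!` of two solutions `y₁, y₂` of `y'' = q0 y + q1 y'`:
with `Aₙ = cfA a b (n+1)`, `Bₙ = cfB a b (n+1)` for `b n = α_{1,n}`, `a n = α_{2,n-1}`,
if the vectors `(y_i^{(N)}(z)/N!, y_i^{(N+1)}(z)/(N+1)!)`, `i = 1,2`, are linearly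
independent then `q_{0,N}(z) A_{N-1} + q_{1,N}(z) B_{N-1} = N!`; if moreover
`α_{2,N-1} ≠ 0` then `q_{0,N}(z) A_{N-2} + q_{1,N}(z) B_{N-2} = 0`, whence
`-q_{0,N}(z)/q_{1,N}(z) = B_{N-2}/A_{N-2}` when `A_{N-2} ≠ 0` and `q_{1,N}(z) ≠ 0`. -/
theorem qRatio_eq_truncated_continued_fraction
    (U : Set ℂ) (hU : IsOpen U)
    (q0 q1 : ℂ → ℂ)
    (hq0 : DifferentiableOn ℂ q0 U) (hq1 : DifferentiableOn ℂ q1 U)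
    (y₁ y₂ : ℂ → ℂ)
    (hy₁ : DifferentiableOn ℂ y₁ U) (hy₂ : DifferentiableOn ℂ y₂ U)
    (heq₁ : ∀ w ∈ U, iteratedDeriv 2 y₁ w = q0 w * y₁ w + q1 w * deriv y₁ w)
    (heq₂ : ∀ w ∈ U, iteratedDeriv 2 y₂ w = q0 w * y₂ w + q1 w * deriv y₂ w)
    (z : ℂ) (hz : z ∈ U)
    (α₁ α₂ : ℕ → ℂ)
    (hrec₁ : ∀ n : ℕ,
      iteratedDeriv n y₁ z / n.factorial =
        α₁ n * (iteratedDeriv (n + 1) y₁ z / (n + 1).factorial) +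
          α₂ n * (iteratedDeriv (n + 2) y₁ z / (n + 2).factorial))
    (hrec₂ : ∀ n : ℕ,
      iteratedDeriv n y₂ z / n.factorial =
        α₁ n * (iteratedDeriv (n + 1) y₂ z / (n + 1).factorial) +
          α₂ n * (iteratedDeriv (n + 2) y₂ z / (n + 2).factorial))
    (N : ℕ) (hN : 2 ≤ N)
    (hindep : LinearIndependent ℂ
      ![![iteratedDeriv N y₁ z / N.factorial,
          iteratedDeriv (N + 1) y₁ z / (N + 1).factorial],
        ![iteratedDeriv N y₂ z / N.factorial,
          iteratedDeriv (N + 1) y₂ z / (N + 1).factorial]]) :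
    (q2Seq q0 q1 (N - 2)).1 z * cfA (fun n => α₂ (n - 1)) α₁ N +
        (q2Seq q0 q1 (N - 2)).2 z * cfB (fun n => α₂ (n - 1)) α₁ N = N.factorial ∧
    (α₂ (N - 1) ≠ 0 →
      (q2Seq q0 q1 (N - 2)).1 z * cfA (fun n => α₂ (n - 1)) α₁ (N - 1) +
        (q2Seq q0 q1 (N - 2)).2 z * cfB (fun n => α₂ (n - 1)) α₁ (N - 1) = 0) ∧
    (α₂ (N - 1) ≠ 0 → cfA (fun n => α₂ (n - 1)) α₁ (N - 1) ≠ 0 →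
      (q2Seq q0 q1 (N - 2)).2 z ≠ 0 →
      -(q2Seq q0 q1 (N - 2)).1 z / (q2Seq q0 q1 (N - 2)).2 z =
        cfB (fun n => α₂ (n - 1)) α₁ (N - 1) / cfA (fun n => α₂ (n - 1)) α₁ (N - 1)) := by
  obtain ⟨s, rfl⟩ : ∃ s, N = s + 2 := ⟨N - 2, by omega⟩
  set a : ℕ → ℂ := fun n => α₂ (n - 1) with ha
  set Q0 : ℂ := (q2Seq q0 q1 s).1 z with hQ0
  set Q1 : ℂ := (q2Seq q0 q1 s).2 z with hQ1
  set x₁ : ℕ → ℂ := fun n => iteratedDeriv n y₁ z / n.factorial with hx₁d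
  set x₂ : ℕ → ℂ := fun n => iteratedDeriv n y₂ z / n.factorial with hx₂d
  have hfac : ((s+2).factorial : ℂ) ≠ 0 := Nat.cast_ne_zero.mpr (Nat.factorial_ne_zero _)
  have hx₁ : ∀ n, x₁ n = α₁ n * x₁ (n+1) + a (n+1) * x₁ (n+2) := by
    intro n; simpa [ha, hx₁d] using hrec₁ n
  have hx₂ : ∀ n, x₂ n = α₁ n * x₂ (n+1) + a (n+1) * x₂ (n+2) := by
    intro n; simpa [ha, hx₂d] using hrec₂ n
  have hsol₁ : ((s+2).factorial : ℂ) * x₁ (s+2) = Q0 * x₁ 0 + Q1 * x₁ 1 := by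
    have hs := sol_iter hU hq0 hq1 hy₁ heq₁ s z hz
    simp only [hx₁d, iteratedDeriv_zero, iteratedDeriv_one, Nat.factorial_one,
      Nat.factorial_zero, Nat.cast_one, div_one]
    rw [mul_div_cancel₀ _ hfac, hs]
  have hsol₂ : ((s+2).factorial : ℂ) * x₂ (s+2) = Q0 * x₂ 0 + Q1 * x₂ 1 := by
    have hs := sol_iter hU hq0 hq1 hy₂ heq₂ s z hz
    simp only [hx₂d, iteratedDeriv_zero, iteratedDeriv_one, Nat.factorial_one,
      Nat.factorial_zero, Nat.cast_one, div_one]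
    rw [mul_div_cancel₀ _ hfac, hs]
  have m₁ := cf_master a α₁ x₁ hx₁ s Q0 Q1 ((s+2).factorial : ℂ) hsol₁
  have m₂ := cf_master a α₁ x₂ hx₂ s Q0 Q1 ((s+2).factorial : ℂ) hsol₂
  -- determinant nonzero
  have hdet : x₁ (s+2) * x₂ (s+3) - x₁ (s+3) * x₂ (s+2) ≠ 0 := by
    have hM : IsUnit (Matrix.of ![![x₁ (s+2), x₁ (s+3)], ![x₂ (s+2), x₂ (s+3)]]) := by
      apply Matrix.linearIndependent_rows_iff_isUnit.mp
      exact hindep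
    rw [Matrix.isUnit_iff_isUnit_det] at hM
    have h := hM.ne_zero
    rw [Matrix.det_fin_two] at h
    simpa using h
  set c : ℂ := Q0 * cfA a α₁ (s+2) + Q1 * cfB a α₁ (s+2) - ((s+2).factorial : ℂ) with hc
  set d : ℂ := a (s+2) * (Q0 * cfA a α₁ (s+1) + Q1 * cfB a α₁ (s+1)) with hd
  have hc0 : c = 0 := by
    have h : c * (x₁ (s+2) * x₂ (s+3) - x₁ (s+3) * x₂ (s+2)) = 0 := by
      linear_combination x₂ (s+3) * m₁ - x₁ (s+3) * m₂
    rcases mul_eq_zero.mp h with h' | h'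
    · exact h'
    · exact absurd h' hdet
  have hd0 : d = 0 := by
    have h : d * (x₁ (s+2) * x₂ (s+3) - x₁ (s+3) * x₂ (s+2)) = 0 := by
      linear_combination x₁ (s+2) * m₂ - x₂ (s+2) * m₁
    rcases mul_eq_zero.mp h with h' | h'
    · exact h'
    · exact absurd h' hdet
  have key2 : α₂ (s+1) ≠ 0 → Q0 * cfA a α₁ (s+1) + Q1 * cfB a α₁ (s+1) = 0 := by
    intro hα
    have haz : a (s+2) = α₂ (s+1) := rfl
    rcases mul_eq_zero.mp (hd ▸ hd0 : a (s+2) * _ = 0) with h' | h'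
    · rw [haz] at h'; exact absurd h' hα
    · exact h'
  refine ⟨?_, ?_, ?_⟩
  · show Q0 * cfA a α₁ (s+2) + Q1 * cfB a α₁ (s+2) = ((s+2).factorial : ℂ)
    linear_combination hc0
  · intro hα
    exact key2 hα
  · intro hα hA hQ
    have h := key2 hα
    show -Q0 / Q1 = cfB a α₁ (s+1) / cfA a α₁ (s+1)
    have hQ' : Q1 ≠ 0 := hQ
    have hA' : cfA a α₁ (s+1) ≠ 0 := hA
    rw [div_eq_div_iff hQ' hA']
    linear_combination -h
end
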